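/- Let G ≤ S_n be transitive with a nontrivial block system whose blocks have size 2, and suppose G contains a transposition τ. Then τ swaps the two points of a single block of size 2, and G is permutation isomorphic to C₂ ≀ H where H ≤ S_{n/2} is the group induced by G on the set of blocks. -/

import Mathlib

/-- Number of orbits of the cyclic group generated by a permutation. -/
noncomputable def orbCount {α : Type*} [Fintype α] (g : Equiv.Perm α) : ℕ :=
  Nat.card (MulAction.orbitRel.Quotient (Subgroup.zpowers g) α)

/-- The index of a permutation: `ind(g) = n - #orbits(⟨g⟩)`. -/
noncomputable def permInd {α : Type*} [Fintype α] (g : Equiv.Perm α) : ℕ :=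
  Fintype.card α - orbCount g

/-- The index of a permutation group: the minimum of `permInd g` over `1 ≠ g ∈ G`. -/
noncomputable def grpInd {α : Type*} [Fintype α] (G : Subgroup (Equiv.Perm α)) : ℕ :=
  sInf {m | ∃ g ∈ G, g ≠ 1 ∧ permInd g = m}

/-- A subgroup of permutations is transitive. -/
def IsTransitive {α : Type*} (G : Subgroup (Equiv.Perm α)) : Prop :=
  ∀ i j : α, ∃ g ∈ G, g i = j

/-- `B` is a block for the permutation group `G`. -/
def IsBlockOf {α : Type*} (G : Subgroup (Equiv.Perm α)) (B : Set α) : Prop :=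
  ∀ g ∈ G, (⇑g '' B = B ∨ Disjoint (⇑g '' B) B)

/-- `G` is a primitive permutation group. -/
def IsPrimitive {α : Type*} (G : Subgroup (Equiv.Perm α)) : Prop :=
  IsTransitive G ∧ ∀ B : Set α, IsBlockOf G B → B.Subsingleton ∨ B = Set.univ

/-- The element of the imprimitive wreath product acting on `Fin d × Fin e` given by
`(i, x) ↦ (h i, f i x)`: the blocks `{i} × Fin e` are permuted by `h` and the `i`-th
base coordinate `f i` acts inside the block. -/
def wrElem {e d : ℕ} (h : Equiv.Perm (Fin d)) (f : Fin d → Equiv.Perm (Fin e)) :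
    Equiv.Perm (Fin d × Fin e) := Equiv.prodShear h f

lemma wrElem_mul {e d : ℕ} (h h' : Equiv.Perm (Fin d)) (f f' : Fin d → Equiv.Perm (Fin e)) :
    wrElem h f * wrElem h' f' = wrElem (h * h') (fun i => f (h' i) * f' i) := by
  ext p <;> simp [wrElem, Equiv.prodShear, Equiv.Perm.mul_apply]

lemma wrElem_one {e d : ℕ} :
    (wrElem (1 : Equiv.Perm (Fin d)) (fun _ => (1 : Equiv.Perm (Fin e)))) = 1 := by
  ext p <;> simp [wrElem, Equiv.prodShear]

/-- The imprimitive wreath product `H₁ ≀ H₂ = H₁^d ⋊ H₂` as a subgroup of the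
permutations of `Fin d × Fin e`. -/
def wreath {e d : ℕ} (H₁ : Subgroup (Equiv.Perm (Fin e))) (H₂ : Subgroup (Equiv.Perm (Fin d))) :
    Subgroup (Equiv.Perm (Fin d × Fin e)) where
  carrier := {g | ∃ h f, h ∈ H₂ ∧ (∀ i, f i ∈ H₁) ∧ g = wrElem h f}
  one_mem' := ⟨1, fun _ => 1, H₂.one_mem, fun _ => H₁.one_mem, wrElem_one.symm⟩
  mul_mem' := by
    rintro a b ⟨h, f, hh, hf, rfl⟩ ⟨h', f', hh', hf', rfl⟩
    exact ⟨h * h', fun i => f (h' i) * f' i, H₂.mul_mem hh hh',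
      fun i => H₁.mul_mem (hf _) (hf' _), wrElem_mul h h' f f'⟩
  inv_mem' := by
    rintro a ⟨h, f, hh, hf, rfl⟩
    refine ⟨h⁻¹, fun j => (f (h⁻¹ j))⁻¹, H₂.inv_mem hh, fun j => H₁.inv_mem (hf _), ?_⟩
    apply inv_eq_of_mul_eq_one_right
    rw [wrElem_mul]
    simp only [mul_inv_cancel]
    exact wrElem_one

/-- The group isomorphism `Perm α ≃* Perm β` induced by an equivalence `α ≃ β`. -/
def permCongrMul {α β : Type*} (σ : α ≃ β) : Equiv.Perm α ≃* Equiv.Perm β :=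
  { Equiv.permCongr σ with
    map_mul' := by intro f g; ext x; simp [Equiv.permCongr] }

lemma phi_apply {d n e : ℕ} (σ : Fin d × Fin e ≃ Fin n) (g : Equiv.Perm (Fin d × Fin e))
    (p : Fin d × Fin e) : (permCongrMul σ) g (σ p) = σ (g p) := by
  simp [permCongrMul, Equiv.permCongr]

lemma wrElem_apply {e d : ℕ} (h : Equiv.Perm (Fin d)) (f : Fin d → Equiv.Perm (Fin e))
    (p : Fin d × Fin e) : wrElem h f p = (h p.1, f p.1 p.2) := rfl

lemma decomp {d n : ℕ} (σ : Fin d × Fin 2 ≃ Fin n) (g : Equiv.Perm (Fin n))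
    (hb : ∀ i : Fin d, ∃ j : Fin d,
      ⇑g '' (⇑σ '' {p : Fin d × Fin 2 | p.1 = i}) = ⇑σ '' {p : Fin d × Fin 2 | p.1 = j}) :
    ∃ (h : Equiv.Perm (Fin d)) (f : Fin d → Equiv.Perm (Fin 2)),
      g = (permCongrMul σ) (wrElem h f) := by
  set F : Fin d × Fin 2 → Fin d × Fin 2 := fun p => σ.symm (g (σ p)) with hF
  have key : ∀ (i : Fin d) (x y : Fin 2), (F (i,x)).1 = (F (i,y)).1 := by
    intro i x y
    obtain ⟨j, hj⟩ := hb i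
    have mem : ∀ z : Fin 2, (F (i,z)).1 = j := by
      intro z
      have h1 : g (σ (i,z)) ∈ ⇑g '' (⇑σ '' {p : Fin d × Fin 2 | p.1 = i}) :=
        ⟨σ (i,z), ⟨(i,z), rfl, rfl⟩, rfl⟩
      rw [hj] at h1
      obtain ⟨q, hq, hq2⟩ := h1
      have hFq : F (i,z) = q := by rw [hF]; simp only; rw [← hq2, σ.symm_apply_apply]
      rw [hFq]; exact hq
    rw [mem x, mem y]
  have hsurj : Function.Surjective (fun i => (F (i,(0:Fin 2))).1) := by
    intro j
    refine ⟨(σ.symm (g⁻¹ (σ (j, (0:Fin 2))))).1, ?_⟩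
    have h1 : F (σ.symm (g⁻¹ (σ (j, (0:Fin 2))))) = (j, 0) := by
      rw [hF]; simp
    have h2 := key (σ.symm (g⁻¹ (σ (j, (0:Fin 2))))).1 0 (σ.symm (g⁻¹ (σ (j, (0:Fin 2))))).2
    simp only [Prod.mk.eta] at h2
    rw [h1] at h2
    exact h2
  have hbij := hsurj.bijective_of_finite
  set h : Equiv.Perm (Fin d) := Equiv.ofBijective _ hbij with hh
  have finj : ∀ i : Fin d, Function.Injective (fun x : Fin 2 => (F (i,x)).2) := by
    intro i x y hxy
    have hFinj : Function.Injective F :=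
      fun a b hab => σ.injective (g.injective (σ.symm.injective hab))
    have : F (i,x) = F (i,y) := Prod.ext (key i x y) hxy
    exact (Prod.mk.injEq _ _ _ _).mp (hFinj this) |>.2
  refine ⟨h, fun i => Equiv.ofBijective _ ((finj i).bijective_of_finite), ?_⟩
  apply Equiv.ext
  intro x
  obtain ⟨p, rfl⟩ := σ.surjective x
  rw [phi_apply]
  have hFp : F p = wrElem h (fun i => Equiv.ofBijective _ ((finj i).bijective_of_finite)) p := by
    rw [wrElem_apply]
    exact Prod.ext (key p.1 p.2 0) rfl
  rw [← hFp, hF]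
  simp

lemma swap_block {d n : ℕ} (σ : Fin d × Fin 2 ≃ Fin n) (G : Subgroup (Equiv.Perm (Fin n)))
    (hblock : ∀ g ∈ G, ∀ i : Fin d, ∃ j : Fin d,
      ⇑g '' (⇑σ '' {p : Fin d × Fin 2 | p.1 = i}) = ⇑σ '' {p : Fin d × Fin 2 | p.1 = j})
    (τ : Equiv.Perm (Fin n)) (hτG : τ ∈ G) (hτ : τ.IsSwap) :
    ∃ i : Fin d, τ = Equiv.swap (σ (i,0)) (σ (i,1)) := by
  obtain ⟨a, b, hab, rfl⟩ := hτ
  obtain ⟨h, f, hdec⟩ := decomp σ _ (hblock _ hτG)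
  set p := σ.symm a with hp
  set q := σ.symm b with hq
  have hpa : σ p = a := σ.apply_symm_apply a
  have hqb : σ q = b := σ.apply_symm_apply b
  have happ : ∀ r : Fin d × Fin 2, Equiv.swap a b (σ r) = σ (h r.1, f r.1 r.2) := by
    intro r; rw [hdec, phi_apply]; rfl
  have hpq : p ≠ q := fun e => hab (by rw [← hpa, ← hqb, e])
  have h1 : p.1 = q.1 := by
    by_contra hne
    have e1 : σ (h p.1, f p.1 p.2) = σ q := by rw [← happ p, hpa, hqb, Equiv.swap_apply_left]
    have e1' : h p.1 = q.1 := congrArg Prod.fst (σ.injective e1)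
    set r : Fin d × Fin 2 := (p.1, Equiv.swap 0 1 p.2) with hr
    have hr2 : ∀ x : Fin 2, Equiv.swap (0:Fin 2) 1 x ≠ x := by decide
    have hrp : σ r ≠ a := by
      rw [← hpa]; intro e; exact hr2 p.2 (congrArg Prod.snd (σ.injective e))
    have hrq : σ r ≠ b := by
      rw [← hqb]; intro e; exact hne (show r.1 = q.1 from congrArg Prod.fst (σ.injective e))
    have e2 : σ (h r.1, f r.1 r.2) = σ r := by
      rw [← happ r]; exact Equiv.swap_apply_of_ne_of_ne hrp hrq
    have e2' : h p.1 = p.1 := congrArg Prod.fst (σ.injective e2)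
    exact hne (e2' ▸ e1')
  have h2 : p.2 ≠ q.2 := fun e => hpq (Prod.ext h1 e)
  have hcase : ∀ x y : Fin 2, x ≠ y → (x = 0 ∧ y = 1) ∨ (x = 1 ∧ y = 0) := by decide
  rcases hcase p.2 q.2 h2 with ⟨hx, hy⟩ | ⟨hx, hy⟩
  · exact ⟨p.1, by
      rw [← hpa, ← hqb, show p = (p.1, (0:Fin 2)) from Prod.ext rfl hx,
        show q = (p.1, (1:Fin 2)) from Prod.ext h1.symm hy]⟩
  · exact ⟨p.1, by
      rw [← hpa, ← hqb, show p = (p.1, (1:Fin 2)) from Prod.ext rfl hx,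
        show q = (p.1, (0:Fin 2)) from Prod.ext h1.symm hy, Equiv.swap_comm]⟩

/-- If `G ≤ Sₙ` is transitive with a block system of blocks of size 2 (given by the
identification `σ : Fin d × Fin 2 ≃ Fin n`) and `τ ∈ G` is a transposition, then `τ` swaps
the two points of a single block and fixes all other points, and `G` is permutation
isomorphic to `C₂ ≀ H` where `H ≤ S_{n/2}` is the transitive group induced on the blocks. -/
theorem stmt_17 {d n : ℕ} (hn : n = 2 * d) (G : Subgroup (Equiv.Perm (Fin n)))
    (hT : IsTransitive G) (σ : Fin d × Fin 2 ≃ Fin n)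
    (hblock : ∀ g ∈ G, ∀ i : Fin d, ∃ j : Fin d,
      ⇑g '' (⇑σ '' {p : Fin d × Fin 2 | p.1 = i}) = ⇑σ '' {p : Fin d × Fin 2 | p.1 = j})
    (τ : Equiv.Perm (Fin n)) (hτG : τ ∈ G) (hτ : τ.IsSwap) :
    (∃ i : Fin d, τ (σ (i, 0)) = σ (i, 1) ∧ τ (σ (i, 1)) = σ (i, 0) ∧
      ∀ x : Fin n, x ≠ σ (i, 0) → x ≠ σ (i, 1) → τ x = x) ∧
    ∃ H : Subgroup (Equiv.Perm (Fin d)), IsTransitive H ∧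
      G = Subgroup.map (permCongrMul σ).toMonoidHom
            (wreath (⊤ : Subgroup (Equiv.Perm (Fin 2))) H) := by
  obtain ⟨i₀, hτ0⟩ := swap_block σ G hblock τ hτG hτ
  have hσne : ∀ (i : Fin d) (x y : Fin 2), x ≠ y → σ (i, x) ≠ σ (i, y) := by
    intro i x y hxy e
    exact hxy (congrArg Prod.snd (σ.injective e))
  -- Step 2: all block swaps are in G
  have hswap : ∀ i : Fin d, Equiv.swap (σ (i,0)) (σ (i,1)) ∈ G := by
    intro i
    obtain ⟨g, hgG, hg⟩ := hT (σ (i₀,0)) (σ (i,0))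
    have hconj : g * τ * g⁻¹ ∈ G := G.mul_mem (G.mul_mem hgG hτG) (G.inv_mem hgG)
    have hne01 : (0:Fin 2) ≠ 1 := by decide
    have hswapconj : g * τ * g⁻¹ = Equiv.swap (g (σ (i₀,0))) (g (σ (i₀,1))) := by
      rw [hτ0, Equiv.swap_apply_apply]
    have hgne : g (σ (i₀,0)) ≠ g (σ (i₀,1)) :=
      fun e => hσne i₀ 0 1 hne01 (g.injective e)
    obtain ⟨j, hj⟩ := swap_block σ G hblock _ hconj ⟨_, _, hgne, hswapconj⟩
    have hmove : (g * τ * g⁻¹) (σ (i,0)) ≠ σ (i,0) := by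
      have : (g * τ * g⁻¹) (σ (i,0)) = g (τ (σ (i₀,0))) := by
        simp [Equiv.Perm.mul_apply, ← hg]
      rw [this, hτ0, Equiv.swap_apply_left]
      intro e
      rw [← hg] at e
      exact hσne i₀ 1 0 (Ne.symm hne01) (g.injective e)
    rw [hj] at hmove
    have hij : (i, (0:Fin 2)) = (j, 0) := by
      rcases eq_or_ne (σ (i,0)) (σ (j,0)) with e | e
      · exact Prod.ext (congrArg Prod.fst (σ.injective e)) rfl
      · rcases eq_or_ne (σ (i,0)) (σ (j,1)) with e' | e'
        · have : ((i:Fin d), (0:Fin 2)) = (j, 1) := σ.injective e'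
          exact absurd (congrArg Prod.snd this) (show ¬(0:Fin 2) = 1 by decide)
        · exact absurd (Equiv.swap_apply_of_ne_of_ne e e') hmove
    have : j = i := (congrArg Prod.fst hij).symm
    rw [this] at hj
    rw [← hj]; exact hconj
  -- Step 3: base group is in G
  have hbase : ∀ v : Fin d → Equiv.Perm (Fin 2), (permCongrMul σ) (wrElem 1 v) ∈ G := by
    have main : ∀ s : Finset (Fin d), ∀ v : Fin d → Equiv.Perm (Fin 2),
        (∀ i ∉ s, v i = 1) → (permCongrMul σ) (wrElem 1 v) ∈ G := by
      intro s
      induction s using Finset.induction_on with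
      | empty =>
        intro v hv
        have hv1 : v = fun _ => 1 := funext fun i => hv i (Finset.notMem_empty i)
        rw [hv1, wrElem_one, map_one]
        exact G.one_mem
      | @insert a s ha ih =>
        intro v hv
        have hdecomp : wrElem (1 : Equiv.Perm (Fin d)) v =
            wrElem 1 (Function.update v a 1) *
            wrElem 1 (Function.update (fun _ => (1 : Equiv.Perm (Fin 2))) a (v a)) := by
          rw [wrElem_mul, one_mul]
          congr 1
          funext i
          by_cases hia : i = a
          · subst hia; simp [Function.update]
          · simp [Function.update, hia]
        rw [hdecomp, map_mul]
        apply G.mul_mem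
        · apply ih
          intro i hi
          by_cases hia : i = a
          · subst hia; simp [Function.update]
          · rw [Function.update_of_ne hia]
            exact hv i (by simp [hia, hi])
        · by_cases hva : v a = 1
          · have : Function.update (fun _ => (1 : Equiv.Perm (Fin 2))) a (v a) =
                fun _ => 1 := by
              funext i; by_cases hia : i = a <;> simp [Function.update, hia, hva]
            rw [this, wrElem_one, map_one]
            exact G.one_mem
          · have hva' : v a = Equiv.swap 0 1 := by
              have hall : ∀ x : Equiv.Perm (Fin 2), x = 1 ∨ x = Equiv.swap 0 1 := by decide
              rcases hall (v a) with h | h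
              · exact absurd h hva
              · exact h
            have heq : (permCongrMul σ)
                (wrElem 1 (Function.update (fun _ => (1 : Equiv.Perm (Fin 2))) a (v a))) =
                Equiv.swap (σ (a,0)) (σ (a,1)) := by
              apply Equiv.ext
              intro x
              obtain ⟨p, rfl⟩ := σ.surjective x
              rw [phi_apply, wrElem_apply]
              by_cases hpa : p.1 = a
              · obtain ⟨i, y⟩ := p
                simp only at hpa
                subst hpa
                rw [hva']
                fin_cases y
                · simp [Function.update, Equiv.swap_apply_left]
                · simp [Function.update, Equiv.swap_apply_right]
              · rw [Function.update_of_ne hpa]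
                have e0 : (((1 : Equiv.Perm (Fin d)) p.1, (1 : Equiv.Perm (Fin 2)) p.2) :
                    Fin d × Fin 2) = p := by simp
                rw [e0, Equiv.swap_apply_of_ne_of_ne]
                · intro e; exact hpa (congrArg Prod.fst (σ.injective e))
                · intro e; exact hpa (congrArg Prod.fst (σ.injective e))
            rw [heq]
            exact hswap a
    exact fun v => main Finset.univ v (fun i hi => absurd (Finset.mem_univ i) hi)
  -- The induced group on blocks
  set H : Subgroup (Equiv.Perm (Fin d)) :=
    { carrier := {h | ∃ g ∈ G, ∃ f, g = (permCongrMul σ) (wrElem h f)}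
      one_mem' := ⟨1, G.one_mem, fun _ => 1, by rw [wrElem_one, map_one]⟩
      mul_mem' := by
        rintro h h' ⟨g, hg, f, rfl⟩ ⟨g', hg', f', rfl⟩
        exact ⟨_, G.mul_mem hg hg', fun i => f (h' i) * f' i, by rw [← map_mul, wrElem_mul]⟩
      inv_mem' := by
        rintro h ⟨g, hg, f, rfl⟩
        refine ⟨_, G.inv_mem hg, fun j => (f (h⁻¹ j))⁻¹, ?_⟩
        rw [← map_inv]
        congr 1
        apply inv_eq_of_mul_eq_one_right
        rw [wrElem_mul]
        simp only [mul_inv_cancel]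
        exact wrElem_one } with hHdef
  have hHT : IsTransitive H := by
    intro i j
    obtain ⟨g, hgG, hg⟩ := hT (σ (i,0)) (σ (j,0))
    obtain ⟨h, f, rfl⟩ := decomp σ g (hblock g hgG)
    refine ⟨h, ⟨_, hgG, f, rfl⟩, ?_⟩
    rw [phi_apply, wrElem_apply] at hg
    exact congrArg Prod.fst (σ.injective hg)
  refine ⟨⟨i₀, ?_, ?_, ?_⟩, H, hHT, ?_⟩
  · rw [hτ0]; exact Equiv.swap_apply_left _ _
  · rw [hτ0]; exact Equiv.swap_apply_right _ _
  · intro x hx0 hx1; rw [hτ0]; exact Equiv.swap_apply_of_ne_of_ne hx0 hx1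
  · apply le_antisymm
    · intro g hg
      obtain ⟨h, f, rfl⟩ := decomp σ g (hblock g hg)
      exact ⟨wrElem h f, ⟨h, f, ⟨_, hg, f, rfl⟩, fun i => trivial, rfl⟩, rfl⟩
    · rintro x ⟨y, ⟨h, f, hh, -, rfl⟩, rfl⟩
      obtain ⟨g, hgG, f₀, hgdef⟩ := hh
      have hsplit : (permCongrMul σ) (wrElem h f) =
          (permCongrMul σ) (wrElem h f₀) *
          (permCongrMul σ) (wrElem 1 (fun i => (f₀ i)⁻¹ * f i)) := by
        have hf : (fun i => f₀ ((1 : Equiv.Perm (Fin d)) i) * ((f₀ i)⁻¹ * f i)) = f := by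
          funext i; simp
        rw [← map_mul, wrElem_mul, mul_one, hf]
      show (permCongrMul σ) (wrElem h f) ∈ G
      rw [hsplit, ← hgdef]
      exact G.mul_mem hgG (hbase _)
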